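/- Let M : (0,∞) → [0,∞) be nondecreasing with M(t) = 0 for 0 < t ≤ 1, and such that t ↦ M(e^t) is convex on ℝ. Then the following are equivalent: (i) there exists H > 1 such that M(t) + log t ≤ M(Ht) + H for all t > 0; (ii) for every integer j ≥ 1 there exists an integer m ≥ j such that ∑_{k=1}^∞ exp( M(j·k^{1/2}) − M(m·k^{1/2}) ) < ∞. -/

import Mathlib

lemma convex_diff_mono (g : ℝ → ℝ) (hg : ConvexOn ℝ Set.univ g) {u v a : ℝ}
    (huv : u ≤ v) (ha : 0 ≤ a) : g (u + a) - g u ≤ g (v + a) - g v := by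
  rcases eq_or_lt_of_le huv with rfl | huv
  · exact le_rfl
  rcases eq_or_lt_of_le ha with rfl | ha
  · simp
  set L : ℝ := v + a - u with hL
  have hLpos : 0 < L := by simp [hL]; linarith
  set lam : ℝ := (v - u) / L with hlam
  set mu : ℝ := a / L with hmu
  have hlam0 : 0 ≤ lam := div_nonneg (by linarith) hLpos.le
  have hmu0 : 0 ≤ mu := by positivity
  have hsum : lam + mu = 1 := by rw [hlam, hmu, ← add_div, div_eq_one_iff_eq hLpos.ne', hL]; ring
  have h1 : g (lam • u + mu • (v + a)) ≤ lam * g u + mu * g (v + a) :=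
    hg.2 (Set.mem_univ u) (Set.mem_univ (v + a)) hlam0 hmu0 hsum
  have h2 : g (mu • u + lam • (v + a)) ≤ mu * g u + lam * g (v + a) :=
    hg.2 (Set.mem_univ u) (Set.mem_univ (v + a)) hmu0 hlam0 (by linarith)
  have e1 : lam • u + mu • (v + a) = u + a := by
    simp only [smul_eq_mul, hlam, hmu]; field_simp; ring
  have e2 : mu • u + lam • (v + a) = v := by
    simp only [smul_eq_mul, hlam, hmu]; field_simp; ring
  rw [e1] at h1; rw [e2] at h2
  have e3 : lam * g u + mu * g (v + a) + (mu * g u + lam * g (v + a)) = g u + g (v + a) := by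
    have : (lam + mu) * g u + (lam + mu) * g (v + a) = g u + g (v + a) := by rw [hsum]; ring
    linarith [this]
  linarith [h1, h2, e3]

lemma antitone_summable_bound {a : ℕ → ℝ} (h0 : ∀ k, 0 ≤ a k)
    (hanti : ∀ k k' : ℕ, k ≤ k' → a k' ≤ a k) (hs : Summable a) :
    ∃ k₀ : ℕ, ∀ k ≥ k₀, a k ≤ 1 / ((k : ℝ) + 1) := by
  have htail : Filter.Tendsto (fun i => ∑' k, a (k + i)) Filter.atTop (nhds 0) :=
    tendsto_sum_nat_add a
  obtain ⟨N, hN⟩ := (htail.eventually_lt_const (by norm_num : (0:ℝ) < 1/2)).exists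
  refine ⟨2 * N + 1, fun k hk => ?_⟩
  have hsumN : Summable (fun j => a (j + N)) := (summable_nat_add_iff N).2 hs
  have hcard : ((k - N + 1 : ℕ) : ℝ) * a k ≤ ∑ j ∈ Finset.range (k - N + 1), a (j + N) := by
    have : ∀ j ∈ Finset.range (k - N + 1), a k ≤ a (j + N) := by
      intro j hj
      apply hanti
      have := Finset.mem_range.1 hj
      omega
    calc ((k - N + 1 : ℕ) : ℝ) * a k = ∑ _j ∈ Finset.range (k - N + 1), a k := by
          simp [mul_comm]
      _ ≤ _ := Finset.sum_le_sum this
  have hle : ∑ j ∈ Finset.range (k - N + 1), a (j + N) ≤ ∑' j, a (j + N) :=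
    Summable.sum_le_tsum _ (fun j _ => h0 _) hsumN
  have key : ((k - N + 1 : ℕ) : ℝ) * a k ≤ 1 / 2 := le_trans hcard (hle.trans hN.le)
  have hcast : ((k : ℝ) + 1) ≤ 2 * ((k - N + 1 : ℕ) : ℝ) := by
    have : k + 1 ≤ 2 * (k - N + 1) := by omega
    calc ((k : ℝ) + 1) = ((k + 1 : ℕ) : ℝ) := by push_cast; ring
      _ ≤ ((2 * (k - N + 1) : ℕ) : ℝ) := by exact_mod_cast this
      _ = 2 * ((k - N + 1 : ℕ) : ℝ) := by push_cast; ring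
  have hkpos : (0:ℝ) < (k : ℝ) + 1 := by positivity
  rw [le_div_iff₀ hkpos]
  nlinarith [h0 k, key, hcast]

theorem nuclearity_characterization (M : ℝ → ℝ)
    (hnonneg : ∀ t : ℝ, 0 < t → 0 ≤ M t)
    (hmono : ∀ s t : ℝ, 0 < s → s ≤ t → M s ≤ M t)
    (h01 : ∀ t : ℝ, 0 < t → t ≤ 1 → M t = 0)
    (hconv : ConvexOn ℝ Set.univ (fun u : ℝ => M (Real.exp u))) :
    (∃ H : ℝ, 1 < H ∧ ∀ t : ℝ, 0 < t → M t + Real.log t ≤ M (H * t) + H) ↔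
      (∀ j : ℕ, 1 ≤ j → ∃ m : ℕ, j ≤ m ∧
        Summable (fun k : ℕ =>
          Real.exp (M ((j : ℝ) * Real.sqrt (k + 1)) - M ((m : ℝ) * Real.sqrt (k + 1))))) := by
  constructor
  · -- (i) → (ii)
    rintro ⟨H, hH1, hi⟩ j hj
    have hH0 : (0:ℝ) < H := by linarith
    have hjR : (1:ℝ) ≤ (j:ℝ) := by exact_mod_cast hj
    refine ⟨j * ⌈H^4⌉₊, ?_, ?_⟩
    · have : 1 ≤ ⌈H^4⌉₊ := by
        rw [Nat.one_le_ceil_iff]; positivity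
      calc j = j * 1 := (mul_one j).symm
        _ ≤ j * ⌈H^4⌉₊ := Nat.mul_le_mul_left j this
    set m : ℕ := j * ⌈H^4⌉₊ with hm
    have hmge : (j:ℝ) * H^4 ≤ (m:ℝ) := by
      have h1 : H^4 ≤ (⌈H^4⌉₊ : ℝ) := Nat.le_ceil _
      have : (m:ℝ) = (j:ℝ) * (⌈H^4⌉₊ : ℝ) := by push_cast [hm]; ring
      rw [this]
      exact mul_le_mul_of_nonneg_left h1 (by linarith)
    -- termwise bound
    have hbound : ∀ k : ℕ,
        Real.exp (M ((j : ℝ) * Real.sqrt (k + 1)) - M ((m : ℝ) * Real.sqrt (k + 1)))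
          ≤ Real.exp (4*H) * (1 / ((k:ℝ) + 1)^2) := by
      intro k
      have hk1 : (0:ℝ) < (k:ℝ) + 1 := by positivity
      set s : ℝ := Real.sqrt ((k:ℝ) + 1) with hs
      have hspos : 0 < s := Real.sqrt_pos.2 hk1
      set t : ℝ := (j:ℝ) * s with ht
      have htpos : 0 < t := by positivity
      have h1 := hi t htpos
      have h2 := hi (H*t) (by positivity)
      have h3 := hi (H*(H*t)) (by positivity)
      have h4 := hi (H*(H*(H*t))) (by positivity)
      have hfac : ∀ x : ℝ, 0 < x → x ≤ H * x := by
        intro x hx; nlinarith [hx, hH1]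
      have hl1 : Real.log t ≤ Real.log (H*t) :=
        Real.log_le_log htpos (hfac t htpos)
      have hl2 : Real.log (H*t) ≤ Real.log (H*(H*t)) :=
        Real.log_le_log (by positivity) (hfac _ (by positivity))
      have hl3 : Real.log (H*(H*t)) ≤ Real.log (H*(H*(H*t))) :=
        Real.log_le_log (by positivity) (hfac _ (by positivity))
      have hchain : M t + 4 * Real.log t ≤ M (H*(H*(H*(H*t)))) + 4*H := by
        linarith [h1, h2, h3, h4, hl1, hl2, hl3]
      have hstep : M (H*(H*(H*(H*t)))) ≤ M ((m:ℝ) * s) := by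
        apply hmono _ _ (by positivity)
        have : H*(H*(H*(H*t))) = (j:ℝ) * H^4 * s := by rw [ht]; ring
        rw [this]
        exact mul_le_mul_of_nonneg_right hmge hspos.le
      have hlogt : (1/2) * Real.log ((k:ℝ)+1) ≤ Real.log t := by
        have hlogj : 0 ≤ Real.log (j:ℝ) := Real.log_nonneg hjR
        have hls : Real.log s = Real.log ((k:ℝ)+1) / 2 := Real.log_sqrt hk1.le
        have : Real.log t = Real.log (j:ℝ) + Real.log s :=
          Real.log_mul (by positivity) (by positivity)
        rw [this, hls]; linarith
      have hdiff : M ((j:ℝ)*s) - M ((m:ℝ)*s) ≤ 4*H - 2 * Real.log ((k:ℝ)+1) := by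
        have : M t + 4 * ((1/2) * Real.log ((k:ℝ)+1)) ≤ M ((m:ℝ)*s) + 4*H := by
          nlinarith [hchain, hstep, hlogt]
        rw [ht] at this
        linarith
      calc Real.exp (M ((j : ℝ) * s) - M ((m : ℝ) * s))
          ≤ Real.exp (4*H - 2 * Real.log ((k:ℝ)+1)) := Real.exp_le_exp.2 hdiff
        _ = Real.exp (4*H) * (1 / ((k:ℝ) + 1)^2) := by
            rw [Real.exp_sub,
              show (2:ℝ) * Real.log ((k:ℝ)+1) = Real.log (((k:ℝ)+1)^2) by
                rw [Real.log_pow]; push_cast; ring,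
              Real.exp_log (by positivity)]
            ring
    have hsum2 : Summable (fun k : ℕ => Real.exp (4*H) * (1 / ((k:ℝ) + 1)^2)) := by
      apply Summable.mul_left
      have h := (Real.summable_one_div_nat_pow (p := 2)).2 (by norm_num)
      have := (summable_nat_add_iff 1).2 h
      refine this.congr fun k => ?_
      push_cast; ring
    exact Summable.of_nonneg_of_le (fun k => (Real.exp_pos _).le) hbound hsum2
  · -- (ii) → (i)
    intro hii
    obtain ⟨m, hm1, hsum⟩ := hii 1 le_rfl
    have hmR : (1:ℝ) ≤ (m:ℝ) := by exact_mod_cast hm1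
    set a : ℕ → ℝ := fun k =>
      Real.exp (M (((1:ℕ) : ℝ) * Real.sqrt (k + 1)) - M ((m : ℝ) * Real.sqrt (k + 1))) with ha
    have hsqrtpos : ∀ k : ℕ, (0:ℝ) < Real.sqrt ((k:ℝ) + 1) := fun k =>
      Real.sqrt_pos.2 (by positivity)
    have hanti : ∀ k k' : ℕ, k ≤ k' → a k' ≤ a k := by
      intro k k' hkk
      apply Real.exp_le_exp.2
      have hD := convex_diff_mono (fun u : ℝ => M (Real.exp u)) hconv
        (u := Real.log (Real.sqrt ((k:ℝ)+1))) (v := Real.log (Real.sqrt ((k':ℝ)+1)))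
        (a := Real.log (m:ℝ))
        (Real.log_le_log (hsqrtpos k)
          (Real.sqrt_le_sqrt (by push_cast; norm_num; exact_mod_cast hkk)))
        (Real.log_nonneg hmR)
      have e1 : ∀ n : ℕ, Real.exp (Real.log (Real.sqrt ((n:ℝ)+1)) + Real.log (m:ℝ))
          = (m:ℝ) * Real.sqrt ((n:ℝ)+1) := by
        intro n
        rw [Real.exp_add, Real.exp_log (hsqrtpos n), Real.exp_log (by linarith :
          (0:ℝ) < (m:ℝ))]
        ring
      have e2 : ∀ n : ℕ, Real.exp (Real.log (Real.sqrt ((n:ℝ)+1)))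
          = Real.sqrt ((n:ℝ)+1) := fun n => Real.exp_log (hsqrtpos n)
      simp only [e1, e2] at hD
      simp only [Nat.cast_one, one_mul]
      push_cast at hD ⊢
      linarith [hD]
    obtain ⟨k₀, hk₀⟩ := antitone_summable_bound (fun k => (Real.exp_pos _).le) hanti hsum
    -- from the bound: for k ≥ k₀, M(m√(k+1)) ≥ M(√(k+1)) + log(k+1)
    have hkey : ∀ k : ℕ, k ≥ k₀ →
        M (Real.sqrt ((k:ℝ)+1)) + Real.log ((k:ℝ)+1) ≤ M ((m:ℝ) * Real.sqrt ((k:ℝ)+1)) := by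
      intro k hk
      have hb := hk₀ k hk
      have hk1 : (0:ℝ) < (k:ℝ) + 1 := by positivity
      have h2 : Real.exp (M (((1:ℕ):ℝ) * Real.sqrt ((k:ℝ)+1)) - M ((m:ℝ) * Real.sqrt ((k:ℝ)+1)))
          ≤ Real.exp (- Real.log ((k:ℝ)+1)) := by
        rw [Real.exp_neg, Real.exp_log hk1, ← one_div]
        exact hb
      have h3 := Real.exp_le_exp.1 h2
      simp only [Nat.cast_one, one_mul] at h3
      linarith
    set H : ℝ := 2 * (m:ℝ) + Real.log ((k₀:ℝ) + 1) with hH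
    have hlogk₀ : 0 ≤ Real.log ((k₀:ℝ) + 1) := Real.log_nonneg (by push_cast; linarith)
    have hH2 : (2:ℝ) ≤ H := by rw [hH]; linarith
    refine ⟨H, by linarith, ?_⟩
    intro t ht
    by_cases hcase : (k₀:ℝ) + 1 ≤ t^2
    · -- big t
      set n : ℕ := ⌈t^2⌉₊ with hn
      have hn1 : 1 ≤ n := by
        rw [hn, Nat.one_le_ceil_iff]; positivity
      set k : ℕ := n - 1 with hk
      have hkn : k + 1 = n := by omega
      have hub : ((k:ℝ) + 1) < t^2 + 1 := by
        have := Nat.ceil_lt_add_one (by positivity : (0:ℝ) ≤ t^2)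
        rw [← hn] at this
        have : ((k+1 : ℕ) : ℝ) < t^2 + 1 := by rw [hkn]; exact_mod_cast this
        push_cast at this; linarith
      have hlb : t^2 ≤ (k:ℝ) + 1 := by
        have := Nat.le_ceil (t^2)
        rw [← hn] at this
        have h' : ((k+1:ℕ):ℝ) = (n:ℝ) := by exact_mod_cast congrArg Nat.cast hkn
        push_cast at h' ⊢
        linarith [this, h']
      have hkk₀ : k ≥ k₀ := by
        have : ((k₀:ℝ) + 1) ≤ (k:ℝ) + 1 := le_trans hcase hlb
        have : (k₀:ℕ) + 1 ≤ k + 1 := by exact_mod_cast this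
        omega
      have hk1 : (0:ℝ) < (k:ℝ) + 1 := by positivity
      set s : ℝ := Real.sqrt ((k:ℝ)+1) with hs
      have hts : t ≤ s := by
        rw [hs]
        have := Real.sqrt_le_sqrt hlb
        rwa [Real.sqrt_sq ht.le] at this
      have hsle : s ≤ Real.sqrt 2 * t := by
        rw [hs]
        have h2t : (k:ℝ) + 1 ≤ 2 * t^2 := by nlinarith [hcase, hub, (Nat.cast_nonneg k₀ : (0:ℝ) ≤ (k₀:ℝ))]
        calc Real.sqrt ((k:ℝ)+1) ≤ Real.sqrt (2 * t^2) := Real.sqrt_le_sqrt h2t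
          _ = Real.sqrt 2 * t := by
              rw [Real.sqrt_mul (by norm_num), Real.sqrt_sq ht.le]
      have hsqrt2 : Real.sqrt 2 ≤ 2 := by
        nlinarith [Real.sq_sqrt (by norm_num : (0:ℝ) ≤ 2), Real.sqrt_nonneg 2]
      have hms : (m:ℝ) * s ≤ H * t := by
        calc (m:ℝ) * s ≤ (m:ℝ) * (Real.sqrt 2 * t) :=
              mul_le_mul_of_nonneg_left hsle (by linarith)
          _ ≤ (m:ℝ) * (2 * t) :=
              mul_le_mul_of_nonneg_left (mul_le_mul_of_nonneg_right hsqrt2 ht.le) (by linarith)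
          _ = 2 * (m:ℝ) * t := by ring
          _ ≤ H * t := by
              apply mul_le_mul_of_nonneg_right _ ht.le
              rw [hH]; linarith
      have hlogt : Real.log t ≤ (1/2) * Real.log ((k:ℝ)+1) := by
        have h1 : Real.log (t^2) ≤ Real.log ((k:ℝ)+1) :=
          Real.log_le_log (by positivity) hlb
        rw [Real.log_pow] at h1
        push_cast at h1
        linarith
      have hMts : M t ≤ M s := hmono t s ht hts
      have hkeyk := hkey k hkk₀
      have hMfin : M ((m:ℝ) * s) ≤ M (H * t) := hmono _ _ (by positivity) hms
      have hlogpos : 0 ≤ Real.log ((k:ℝ)+1) := Real.log_nonneg (by push_cast; linarith [Nat.cast_nonneg (α := ℝ) k])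
      have hHpos : (0:ℝ) ≤ H := by linarith
      linarith [hkeyk, hMts, hMfin, hlogt, hlogpos, hHpos]
    · -- small t
      push_neg at hcase
      have hlogt : Real.log t ≤ H := by
        have h1 : Real.log (t^2) ≤ Real.log ((k₀:ℝ)+1) :=
          Real.log_le_log (by positivity) hcase.le
        rw [Real.log_pow] at h1
        push_cast at h1
        rw [hH]
        linarith [hlogk₀, hmR]
      have hMt : M t ≤ M (H * t) := hmono t (H*t) ht (by nlinarith)
      linarith
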